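/- For every z ∈ ℂ and every τ in the upper half-plane, θ[1;3/4]²·θ[1;1/4](z,τ)·θ[1;7/4](z,τ) − θ[1;1/4]²·θ[1;3/4](z,τ)·θ[1;5/4](z,τ) + θ[1;0]·θ[1;1/2]·θ[1;1](z,τ)² = 0. -/

import Mathlib

open Complex

/-- Theta function with characteristics `[ε; ε']` of Farkas and Kra. -/
noncomputable def thetaChar (ε ε' : ℝ) (ζ τ : ℂ) : ℂ :=
  ∑' n : ℤ, Complex.exp (2 * (Real.pi : ℂ) * I *
    ((1 / 2) * ((n : ℂ) + (ε : ℂ) / 2) ^ 2 * τ + ((n : ℂ) + (ε : ℂ) / 2) * (ζ + (ε' : ℂ) / 2)))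

namespace Stmt2Aux

/-- The general term of a theta series with characteristic `ε = 1`. -/
noncomputable def F (τ c : ℂ) (n : ℤ) : ℂ :=
  Complex.exp (2 * (Real.pi : ℂ) * I *
    ((1 / 2) * ((n : ℂ) + 1 / 2) ^ 2 * τ + ((n : ℂ) + 1 / 2) * c))

lemma F_eq (τ c : ℂ) (n : ℤ) :
    F τ c n = Complex.exp ((Real.pi : ℂ) * I * τ / 4 + (Real.pi : ℂ) * I * c) *
      jacobiTheta₂_term n (c + τ / 2) τ := by
  rw [F, jacobiTheta₂_term, ← Complex.exp_add]
  congr 1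
  ring

lemma summable_norm_F {τ : ℂ} (hτ : 0 < τ.im) (c : ℂ) :
    Summable fun n : ℤ => ‖F τ c n‖ := by
  have h : Summable fun n : ℤ => ‖jacobiTheta₂_term n (c + τ / 2) τ‖ :=
    summable_norm_iff.mpr ((summable_jacobiTheta₂_term_iff (c + τ / 2) τ).mpr hτ)
  simpa only [F_eq, norm_mul] using h.mul_left _

lemma theta_eq (ε' : ℝ) (ζ τ c : ℂ) (hc : c = ζ + (ε' : ℂ) / 2) :
    thetaChar 1 ε' ζ τ = ∑' n : ℤ, F τ c n := by
  subst hc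
  unfold thetaChar F
  refine tsum_congr fun n => ?_
  norm_num

/-- The index type for the quadruple sums. -/
abbrev X := ((ℤ × ℤ) × ℤ) × ℤ

noncomputable def g1 (τ z : ℂ) : X → ℂ := fun x =>
  F τ (3/8) x.1.1.1 * F τ (3/8) x.1.1.2 * F τ (z + 1/8) x.1.2 * F τ (z + 7/8) x.2

noncomputable def g2 (τ z : ℂ) : X → ℂ := fun x =>
  F τ (1/8) x.1.1.1 * F τ (1/8) x.1.1.2 * F τ (z + 3/8) x.1.2 * F τ (z + 5/8) x.2

noncomputable def g3 (τ z : ℂ) : X → ℂ := fun x =>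
  F τ 0 x.1.1.1 * F τ (1/4) x.1.1.2 * F τ (z + 1/2) x.1.2 * F τ (z + 1/2) x.2

/-- The set of indices with odd coordinate sum. -/
def O : Set X := {x : X | (x.1.1.1 + x.1.1.2 + x.1.2 + x.2) % 2 = 1}

lemma cast_div_two {a : ℤ} (h : a % 2 = 0) : ((a / 2 : ℤ) : ℂ) = (a : ℂ) / 2 := by
  obtain ⟨k, rfl⟩ : ∃ k, a = 2 * k := ⟨a / 2, by omega⟩
  rw [show 2 * k / 2 = k by omega]
  push_cast
  ring

lemma exp_eq_exp_of (x y : ℂ) (k : ℤ) (h : x = y + k * (2 * (Real.pi : ℂ) * I)) :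
    Complex.exp x = Complex.exp y := by
  rw [h, Complex.exp_add, Complex.exp_int_mul_two_pi_mul_I, mul_one]

lemma exp_eq_neg_exp_of (x y : ℂ) (k : ℤ)
    (h : x = y + k * (2 * (Real.pi : ℂ) * I) + (Real.pi : ℂ) * I) :
    Complex.exp x = -Complex.exp y := by
  rw [h, Complex.exp_add, Complex.exp_add, Complex.exp_int_mul_two_pi_mul_I,
    Complex.exp_pi_mul_I]
  ring

lemma key1 (τ z : ℂ) (m n m' n' M N M' N' : ℤ)
    (hM : (M : ℂ) = ((m : ℂ) + n + m' + n' + 1) / 2)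
    (hN : (N : ℂ) = ((m : ℂ) + n - m' - n' - 1) / 2)
    (hM' : (M' : ℂ) = ((m : ℂ) - n + m' - n' - 1) / 2)
    (hN' : (N' : ℂ) = ((m : ℂ) - n - m' + n' - 1) / 2) :
    F τ (1/8) M' * F τ (1/8) N' * F τ (z + 3/8) M * F τ (z + 5/8) N
      = F τ (3/8) m' * F τ (3/8) n' * F τ (z + 1/8) m * F τ (z + 7/8) n := by
  unfold F
  rw [← Complex.exp_add, ← Complex.exp_add, ← Complex.exp_add,
    ← Complex.exp_add, ← Complex.exp_add, ← Complex.exp_add]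
  refine exp_eq_exp_of _ _ (M' - m') ?_
  push_cast
  rw [hM, hN, hM', hN']
  ring

lemma key2 (τ z : ℂ) (m n m' n' M N M' N' : ℤ)
    (hM : (M : ℂ) = ((m : ℂ) + n + m' - n') / 2)
    (hN : (N : ℂ) = ((m : ℂ) + n - m' + n') / 2)
    (hM' : (M' : ℂ) = ((m' : ℂ) + n' + m - n) / 2)
    (hN' : (N' : ℂ) = ((m' : ℂ) + n' - m + n) / 2) :
    F τ 0 M' * F τ (1/4) N' * F τ (z + 1/2) M * F τ (z + 1/2) N
      = F τ (1/8) m' * F τ (1/8) n' * F τ (z + 3/8) m * F τ (z + 5/8) n := by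
  unfold F
  rw [← Complex.exp_add, ← Complex.exp_add, ← Complex.exp_add,
    ← Complex.exp_add, ← Complex.exp_add, ← Complex.exp_add]
  congr 1
  rw [hM, hN, hM', hN']
  ring

lemma key3 (τ z : ℂ) (m n m' n' M N M' N' : ℤ)
    (hM : (M : ℂ) = ((m : ℂ) + n + m' - n') / 2)
    (hN : (N : ℂ) = ((m : ℂ) + n - m' + n') / 2)
    (hM' : (M' : ℂ) = ((m : ℂ) - n + m' + n') / 2)
    (hN' : (N' : ℂ) = ((m : ℂ) - n - m' - n' - 2) / 2) :
    F τ 0 M' * F τ (1/4) N' * F τ (z + 1/2) M * F τ (z + 1/2) N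
      = -(F τ (3/8) m' * F τ (3/8) n' * F τ (z + 1/8) m * F τ (z + 7/8) n) := by
  unfold F
  rw [← Complex.exp_add, ← Complex.exp_add, ← Complex.exp_add,
    ← Complex.exp_add, ← Complex.exp_add, ← Complex.exp_add]
  refine exp_eq_neg_exp_of _ _ N' ?_
  rw [hM, hN, hM', hN']
  ring

/-- Involution implementing the swap `d ↔ s'` (on the odd part). -/
def e1 : X → X
  | (((m', n'), m), n) =>
    if (m' + n' + m + n) % 2 = 1 then
      ((((m - n + m' - n' - 1) / 2, (m - n - m' + n' - 1) / 2),
        (m + n + m' + n' + 1) / 2), (m + n - m' - n' - 1) / 2)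
    else (((m', n'), m), n)

/-- Involution implementing the swap `d ↔ d'` (on the even part). -/
def e2 : X → X
  | (((m', n'), m), n) =>
    if (m' + n' + m + n) % 2 = 0 then
      ((((m' + n' + m - n) / 2, (m' + n' - m + n) / 2),
        (m + n + m' - n') / 2), (m + n - m' + n') / 2)
    else (((m', n'), m), n)

/-- Involution exchanging the even and odd parts (the 3-cycle `(d, s', d')`). -/
def e3 : X → X
  | (((m', n'), m), n) =>
    if (m' + n' + m + n) % 2 = 0 then
      ((((m - n + m' + n') / 2, (m - n - m' - n' - 2) / 2),
        (m + n + m' - n') / 2), (m + n - m' + n') / 2)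
    else
      ((((m' - n' + m - n - 1) / 2, (m' - n' - m + n - 1) / 2),
        (m + n + m' + n' + 1) / 2), (m + n - m' - n' - 1) / 2)

lemma he1 : Function.Involutive e1 := by
  rintro ⟨⟨⟨m', n'⟩, m⟩, n⟩
  by_cases h : (m' + n' + m + n) % 2 = 1
  · simp only [e1]
    simp only [if_pos h]
    rw [if_pos (by omega)]
    simp only [Prod.mk.injEq]
    omega
  · simp only [e1]
    simp only [if_neg h]

lemma he2 : Function.Involutive e2 := by
  rintro ⟨⟨⟨m', n'⟩, m⟩, n⟩
  by_cases h : (m' + n' + m + n) % 2 = 0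
  · simp only [e2]
    simp only [if_pos h]
    rw [if_pos (by omega)]
    simp only [Prod.mk.injEq]
    omega
  · simp only [e2]
    simp only [if_neg h]

lemma he3 : Function.Involutive e3 := by
  rintro ⟨⟨⟨m', n'⟩, m⟩, n⟩
  by_cases h : (m' + n' + m + n) % 2 = 0
  · simp only [e3]
    simp only [if_pos h]
    rw [if_neg (by omega)]
    simp only [Prod.mk.injEq]
    omega
  · simp only [e3]
    simp only [if_neg h]
    rw [if_pos (by omega)]
    simp only [Prod.mk.injEq]
    omega

end Stmt2Aux

open Stmt2Aux in
theorem stmt_2 (z τ : ℂ) (hτ : 0 < τ.im) :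
    thetaChar 1 (3/4) 0 τ ^ 2 * thetaChar 1 (1/4) z τ * thetaChar 1 (7/4) z τ
      - thetaChar 1 (1/4) 0 τ ^ 2 * thetaChar 1 (3/4) z τ * thetaChar 1 (5/4) z τ
      + thetaChar 1 0 0 τ * thetaChar 1 (1/2) 0 τ * thetaChar 1 1 z τ ^ 2 = 0 := by
  classical
  have hF : ∀ c : ℂ, Summable fun n : ℤ => ‖F τ c n‖ := fun c => summable_norm_F hτ c
  -- rewrite the theta functions as series of `F`
  rw [theta_eq (3/4) 0 τ (3/8) (by push_cast; ring),
      theta_eq (1/4) z τ (z + 1/8) (by push_cast; ring),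
      theta_eq (7/4) z τ (z + 7/8) (by push_cast; ring),
      theta_eq (1/4) 0 τ (1/8) (by push_cast; ring),
      theta_eq (3/4) z τ (z + 3/8) (by push_cast; ring),
      theta_eq (5/4) z τ (z + 5/8) (by push_cast; ring),
      theta_eq 0 0 τ 0 (by push_cast; ring),
      theta_eq (1/2) 0 τ (1/4) (by push_cast; ring),
      theta_eq 1 z τ (z + 1/2) (by push_cast; ring),
      pow_two, pow_two, pow_two, ← mul_assoc]
  -- turn the three products of four series into sums over `X`
  have t1 : (∑' n : ℤ, F τ (3/8) n) * (∑' n : ℤ, F τ (3/8) n) * (∑' n : ℤ, F τ (z + 1/8) n)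
      * (∑' n : ℤ, F τ (z + 7/8) n) = ∑' x : X, g1 τ z x := by
    rw [tsum_mul_tsum_of_summable_norm (hF _) (hF _),
      tsum_mul_tsum_of_summable_norm ((hF _).mul_norm (hF _)) (hF _),
      tsum_mul_tsum_of_summable_norm (((hF _).mul_norm (hF _)).mul_norm (hF _)) (hF _)]
    rfl
  have t2 : (∑' n : ℤ, F τ (1/8) n) * (∑' n : ℤ, F τ (1/8) n) * (∑' n : ℤ, F τ (z + 3/8) n)
      * (∑' n : ℤ, F τ (z + 5/8) n) = ∑' x : X, g2 τ z x := by
    rw [tsum_mul_tsum_of_summable_norm (hF _) (hF _),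
      tsum_mul_tsum_of_summable_norm ((hF _).mul_norm (hF _)) (hF _),
      tsum_mul_tsum_of_summable_norm (((hF _).mul_norm (hF _)).mul_norm (hF _)) (hF _)]
    rfl
  have t3 : (∑' n : ℤ, F τ 0 n) * (∑' n : ℤ, F τ (1/4) n) * (∑' n : ℤ, F τ (z + 1/2) n)
      * (∑' n : ℤ, F τ (z + 1/2) n) = ∑' x : X, g3 τ z x := by
    rw [tsum_mul_tsum_of_summable_norm (hF _) (hF _),
      tsum_mul_tsum_of_summable_norm ((hF _).mul_norm (hF _)) (hF _),
      tsum_mul_tsum_of_summable_norm (((hF _).mul_norm (hF _)).mul_norm (hF _)) (hF _)]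
    rfl
  rw [t1, t2, t3]
  -- summability of the quadruple sums
  have hg1 : Summable (g1 τ z) :=
    Summable.of_norm ((((hF _).mul_norm (hF _)).mul_norm (hF _)).mul_norm (hF _))
  have hg2 : Summable (g2 τ z) :=
    Summable.of_norm ((((hF _).mul_norm (hF _)).mul_norm (hF _)).mul_norm (hF _))
  have hg3 : Summable (g3 τ z) :=
    Summable.of_norm ((((hF _).mul_norm (hF _)).mul_norm (hF _)).mul_norm (hF _))
  -- split each sum according to the parity of the coordinate sum
  have hsplit : ∀ g : X → ℂ, Summable g →
      ∑' x : X, g x = (∑' x : X, O.indicator g x) + ∑' x : X, Oᶜ.indicator g x := by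
    intro g hg
    rw [← Summable.tsum_add (hg.indicator O) (hg.indicator Oᶜ)]
    exact tsum_congr fun x => (congrFun (Set.indicator_self_add_compl O g) x).symm
  rw [hsplit _ hg1, hsplit _ hg2, hsplit _ hg3]
  -- the pointwise identities coming from the three involutions
  have hpt1 : ∀ x : X, O.indicator (g2 τ z) (e1 x) = O.indicator (g1 τ z) x := by
    rintro ⟨⟨⟨m', n'⟩, m⟩, n⟩
    by_cases h : (m' + n' + m + n) % 2 = 1
    · simp only [e1]
      rw [if_pos h]
      rw [Set.indicator_of_mem (show
          ((((m - n + m' - n' - 1) / 2, (m - n - m' + n' - 1) / 2),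
            (m + n + m' + n' + 1) / 2), (m + n - m' - n' - 1) / 2) ∈ O by
          simp only [O, Set.mem_setOf_eq]; omega),
        Set.indicator_of_mem (show (((m', n'), m), n) ∈ O by
          simp only [O, Set.mem_setOf_eq]; omega)]
      exact key1 τ z m n m' n'
        ((m + n + m' + n' + 1) / 2) ((m + n - m' - n' - 1) / 2)
        ((m - n + m' - n' - 1) / 2) ((m - n - m' + n' - 1) / 2)
        (by rw [cast_div_two (by omega)]; push_cast; ring)
        (by rw [cast_div_two (by omega)]; push_cast; ring)
        (by rw [cast_div_two (by omega)]; push_cast; ring)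
        (by rw [cast_div_two (by omega)]; push_cast; ring)
    · simp only [e1]
      rw [if_neg h,
        Set.indicator_of_notMem (show (((m', n'), m), n) ∉ O by
          simp only [O, Set.mem_setOf_eq]; omega),
        Set.indicator_of_notMem (show (((m', n'), m), n) ∉ O by
          simp only [O, Set.mem_setOf_eq]; omega)]
  have hpt2 : ∀ x : X, Oᶜ.indicator (g3 τ z) (e2 x) = Oᶜ.indicator (g2 τ z) x := by
    rintro ⟨⟨⟨m', n'⟩, m⟩, n⟩
    by_cases h : (m' + n' + m + n) % 2 = 0
    · simp only [e2]
      rw [if_pos h]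
      rw [Set.indicator_of_mem (show
          ((((m' + n' + m - n) / 2, (m' + n' - m + n) / 2),
            (m + n + m' - n') / 2), (m + n - m' + n') / 2) ∈ Oᶜ by
          simp only [O, Set.mem_compl_iff, Set.mem_setOf_eq]; omega),
        Set.indicator_of_mem (show (((m', n'), m), n) ∈ Oᶜ by
          simp only [O, Set.mem_compl_iff, Set.mem_setOf_eq]; omega)]
      exact key2 τ z m n m' n'
        ((m + n + m' - n') / 2) ((m + n - m' + n') / 2)
        ((m' + n' + m - n) / 2) ((m' + n' - m + n) / 2)
        (by rw [cast_div_two (by omega)]; push_cast; ring)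
        (by rw [cast_div_two (by omega)]; push_cast; ring)
        (by rw [cast_div_two (by omega)]; push_cast; ring)
        (by rw [cast_div_two (by omega)]; push_cast; ring)
    · simp only [e2]
      rw [if_neg h,
        Set.indicator_of_notMem (show (((m', n'), m), n) ∉ Oᶜ by
          simp only [O, Set.mem_compl_iff, Set.mem_setOf_eq]; omega),
        Set.indicator_of_notMem (show (((m', n'), m), n) ∉ Oᶜ by
          simp only [O, Set.mem_compl_iff, Set.mem_setOf_eq]; omega)]
  have hpt3 : ∀ x : X, O.indicator (g3 τ z) (e3 x) = -(Oᶜ.indicator (g1 τ z) x) := by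
    rintro ⟨⟨⟨m', n'⟩, m⟩, n⟩
    by_cases h : (m' + n' + m + n) % 2 = 0
    · simp only [e3]
      rw [if_pos h]
      rw [Set.indicator_of_mem (show
          ((((m - n + m' + n') / 2, (m - n - m' - n' - 2) / 2),
            (m + n + m' - n') / 2), (m + n - m' + n') / 2) ∈ O by
          simp only [O, Set.mem_setOf_eq]; omega),
        Set.indicator_of_mem (show (((m', n'), m), n) ∈ Oᶜ by
          simp only [O, Set.mem_compl_iff, Set.mem_setOf_eq]; omega)]
      exact key3 τ z m n m' n'
        ((m + n + m' - n') / 2) ((m + n - m' + n') / 2)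
        ((m - n + m' + n') / 2) ((m - n - m' - n' - 2) / 2)
        (by rw [cast_div_two (by omega)]; push_cast; ring)
        (by rw [cast_div_two (by omega)]; push_cast; ring)
        (by rw [cast_div_two (by omega)]; push_cast; ring)
        (by rw [cast_div_two (by omega)]; push_cast; ring)
    · simp only [e3]
      rw [if_neg h,
        Set.indicator_of_notMem (show
          ((((m' - n' + m - n - 1) / 2, (m' - n' - m + n - 1) / 2),
            (m + n + m' + n' + 1) / 2), (m + n - m' - n' - 1) / 2) ∉ O by
          simp only [O, Set.mem_setOf_eq]; omega),
        Set.indicator_of_notMem (show (((m', n'), m), n) ∉ Oᶜ by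
          simp only [O, Set.mem_compl_iff, Set.mem_setOf_eq]; omega)]
      ring
  -- the three cancellations
  have E1 : ∑' x : X, O.indicator (g1 τ z) x = ∑' x : X, O.indicator (g2 τ z) x := by
    rw [← Equiv.tsum_eq (Function.Involutive.toPerm e1 he1) (O.indicator (g2 τ z))]
    exact tsum_congr fun x => (hpt1 x).symm
  have E2 : ∑' x : X, Oᶜ.indicator (g2 τ z) x = ∑' x : X, Oᶜ.indicator (g3 τ z) x := by
    rw [← Equiv.tsum_eq (Function.Involutive.toPerm e2 he2) (Oᶜ.indicator (g3 τ z))]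
    exact tsum_congr fun x => (hpt2 x).symm
  have E3 : ∑' x : X, O.indicator (g3 τ z) x = -∑' x : X, Oᶜ.indicator (g1 τ z) x :=
    calc ∑' x : X, O.indicator (g3 τ z) x
        = ∑' x : X, O.indicator (g3 τ z) (e3 x) :=
          (Equiv.tsum_eq (Function.Involutive.toPerm e3 he3) (O.indicator (g3 τ z))).symm
      _ = ∑' x : X, -(Oᶜ.indicator (g1 τ z) x) := tsum_congr hpt3
      _ = -∑' x : X, Oᶜ.indicator (g1 τ z) x := tsum_neg
  linear_combination E1 - E2 + E3
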